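/- Identity relational connectors are neutral for composition: for every relational connector L : G → F between Set functors, L = id_F · L = L · id_G. -/

import Mathlib

open CategoryTheory

universe u

/-- A `Set` functor: a functor from the category of sets (types) to itself. -/
abbrev SetFunctor : Type (u + 1) := CategoryTheory.Functor (Type u) (Type u)

/-- Applicative-order composition of relations: `(rcomp s r) x z ↔ ∃ y, r x y ∧ s y z`,
i.e. `s · r` in the notation of the paper. -/
def rcomp {X Y Z : Type u} (s : Y → Z → Prop) (r : X → Y → Prop) : X → Z → Prop :=
  fun x z => ∃ y, r x y ∧ s y z

/-- Relational converse `r°`. -/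
def rconv {X Y : Type u} (r : X → Y → Prop) : Y → X → Prop := fun y x => r x y

/-- The graph of a function, identifying functions with relations. -/
def graph {X Y : Type u} (f : X → Y) : X → Y → Prop := fun x y => f x = y

/-- The diagonal relation `Δ_X`. -/
def diag (X : Type u) : X → X → Prop := fun x y => x = y

/-- Relational image `r[A]`. -/
def rimage {X Y : Type u} (r : X → Y → Prop) (A : Set X) : Set Y :=
  {y | ∃ x ∈ A, r x y}

/-- The pointwise product of two `Set` functors. -/
def prodFunctor (F₁ F₂ : SetFunctor.{u}) : SetFunctor.{u} where
  obj X := F₁.obj X × F₂.obj X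
  map f := TypeCat.ofHom fun (p : F₁.obj _ × F₂.obj _) => (F₁.map f p.1, F₂.map f p.2)
  map_id X := by ext p <;> simp
  map_comp f g := by ext p <;> simp

/-- An assignment of relations `F X ⇸ G Y` to relations `X ⇸ Y`; a relational connector
is such an assignment satisfying monotonicity and naturality (`RelConn.IsConnector`). -/
structure RelConn (F G : SetFunctor.{u}) : Type (u + 1) where
  rel : ∀ {X Y : Type u}, (X → Y → Prop) → F.obj X → G.obj Y → Prop

namespace RelConn

variable {F G H V : SetFunctor.{u}}

/-- Monotonicity: `r₁ ⊆ r₂` implies `L r₁ ⊆ L r₂`. -/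
def Mono (L : RelConn F G) : Prop :=
  ∀ (X Y : Type u) (r₁ r₂ : X → Y → Prop), (∀ x y, r₁ x y → r₂ x y) →
    ∀ a b, L.rel r₁ a b → L.rel r₂ a b

/-- Naturality: `L(g° · r · f) = (G g)° · L r · F f`. -/
def Natural (L : RelConn F G) : Prop :=
  ∀ (X X' Y Y' : Type u) (f : X' → X) (g : Y' → Y) (r : X → Y → Prop),
    L.rel (rcomp (rconv (graph g)) (rcomp r (graph f))) =
      rcomp (rconv (graph (G.map (TypeCat.ofHom g)))) (rcomp (L.rel r) (graph (F.map (TypeCat.ofHom f))))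

/-- A relational connector: a monotone and natural assignment of relations. -/
def IsConnector (L : RelConn F G) : Prop := L.Mono ∧ L.Natural

/-- The pointwise order on connectors: `L ≤ K` iff `L r ⊆ K r` for all `r`. -/
def le (L K : RelConn F G) : Prop :=
  ∀ (X Y : Type u) (r : X → Y → Prop) (a : F.obj X) (b : G.obj Y), L.rel r a b → K.rel r a b

/-- The composite `L · K` of relational connectors:
`(L · K) r = ⋃ { L s · K t | s · t = r }`, the join over all factorizations of `r`
through an arbitrary intermediate set `Y`. -/
def comp (L : RelConn G H) (K : RelConn F G) : RelConn F H where
  rel := fun {X Z} r a c => ∃ (Y : Type u) (t : X → Y → Prop) (s : Y → Z → Prop),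
    rcomp s t = r ∧ ∃ b, K.rel t a b ∧ L.rel s b c

/-- The converse `L°` of a connector: `L° r = (L (r°))°`. -/
def conv (L : RelConn F G) : RelConn G F where
  rel := fun {X Y} r b a => L.rel (rconv r) a b

/-- The meet (pointwise intersection) of two connectors. -/
def meet (L K : RelConn F G) : RelConn F G where
  rel := fun {X Y} r a b => L.rel r a b ∧ K.rel r a b

/-- The product `L₁ × L₂` of connectors. -/
def prod {F₁ F₂ G₁ G₂ : SetFunctor.{u}} (L₁ : RelConn F₁ G₁) (L₂ : RelConn F₂ G₂) :
    RelConn (prodFunctor F₁ F₂) (prodFunctor G₁ G₂) where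
  rel := fun {X Y} r p q => L₁.rel r p.1 q.1 ∧ L₂.rel r p.2 q.2

/-- The identity relational connector `id_F`: `b (id_F r) c` iff for all set functors `G`,
all relational connectors `L : G → F`, all `s : Z ⇸ X` and `a ∈ G Z`,
`a (L s) b` implies `a (L (r · s)) c`. -/
def id (F : SetFunctor.{u}) : RelConn F F where
  rel := fun {X Y} r b c =>
    ∀ (G : SetFunctor.{u}) (L : RelConn G F), L.IsConnector →
      ∀ (Z : Type u) (s : Z → X → Prop) (a : G.obj Z),
        L.rel s a b → L.rel (rcomp r s) a c

/-- A connector `L : F → F` is transitive if `L · L ≤ L`. -/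
def Transitive (L : RelConn F F) : Prop := (L.comp L).le L

/-- A connector `L : F → F` is symmetric if `L° ≤ L`. -/
def Symmetric (L : RelConn F F) : Prop := L.conv.le L

/-- A connector `L : F → F` extends `F` if `Δ_{F X} ⊆ L Δ_X` for all `X`. -/
def ExtendsF (L : RelConn F F) : Prop :=
  ∀ (X : Type u) (a b : F.obj X), diag (F.obj X) a b → L.rel (diag X) a b

/-- Condition (L2) of lax extensions: `L s · L r ⊆ L (s · r)`. -/
def LaxL2 (L : RelConn F F) : Prop :=
  ∀ (X Y Z : Type u) (r : X → Y → Prop) (s : Y → Z → Prop) (a : F.obj X) (c : F.obj Z),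
    rcomp (L.rel s) (L.rel r) a c → L.rel (rcomp s r) a c

/-- Condition (L3) of lax extensions: `F f ⊆ L f` and `(F f)° ⊆ L (f°)`. -/
def LaxL3 (L : RelConn F F) : Prop :=
  ∀ (X Y : Type u) (f : X → Y),
    (∀ a b, graph (F.map (TypeCat.ofHom f)) a b → L.rel (graph f) a b) ∧
    (∀ b a, rconv (graph (F.map (TypeCat.ofHom f))) b a → L.rel (rconv (graph f)) b a)

/-- A lax extension of `F`: an assignment of relations satisfying (L1) monotonicity,
(L2) and (L3). -/
def IsLaxExtension (L : RelConn F F) : Prop := L.Mono ∧ L.LaxL2 ∧ L.LaxL3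

/-- A connector `L : F → G` extends a natural transformation `α : F ⇒ G` if the graph of
`α_X` is contained in `L Δ_X` for all sets `X`. -/
def Extends (L : RelConn F G) (α : F ⟶ G) : Prop :=
  ∀ (X : Type u) (a : F.obj X) (b : G.obj X), graph (α.app X) a b → L.rel (diag X) a b

end RelConn

/-- The connector `id_G • α` obtained from a natural transformation `α : F ⇒ G`:
`(id_G • α) r = (id_G r) · α_X`. -/
def idBullet {F G : SetFunctor.{u}} (α : F ⟶ G) : RelConn F G where
  rel := fun {X Y} r => rcomp ((RelConn.id G).rel r) (graph (α.app X))

/-- The intermediate set of the couniversal factorization of `r : X ⇸ Z`: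
`{(A,B) ∈ P(X) × P(Z) | A × B ⊆ r}`. -/
def CoInt {X Z : Type u} (r : X → Z → Prop) : Type u :=
  {p : Set X × Set Z // ∀ x ∈ p.1, ∀ z ∈ p.2, r x z}

/-- The first leg `t = {(x,(A,B)) | x ∈ A}` of the couniversal factorization. -/
def coT {X Z : Type u} (r : X → Z → Prop) : X → CoInt r → Prop := fun x p => x ∈ p.1.1

/-- The second leg `s = {((A,B),z) | z ∈ B}` of the couniversal factorization. -/
def coS {X Z : Type u} (r : X → Z → Prop) : CoInt r → Z → Prop := fun p z => z ∈ p.1.2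

/-- `f : (C,γ) → (D,δ)` is a morphism of `F`-coalgebras: `F f ∘ γ = δ ∘ f`. -/
def IsCoalgMor {F : SetFunctor.{u}} {C D : Type u} (γ : C → F.obj C) (δ : D → F.obj D)
    (f : C → D) : Prop := ∀ x, F.map (TypeCat.ofHom f) (γ x) = δ (f x)

/-- `r : C ⇸ D` is an `L`-simulation between the `F`-coalgebra `(C,γ)` and the
`G`-coalgebra `(D,δ)`: `x r y` implies `γ x (L r) δ y`. -/
def IsSim {F G : SetFunctor.{u}} (L : RelConn F G) {C D : Type u}
    (γ : C → F.obj C) (δ : D → G.obj D) (r : C → D → Prop) : Prop :=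
  ∀ x y, r x y → L.rel r (γ x) (δ y)

/-- `L`-similarity: `x ≼_L y` iff some `L`-simulation relates `x` to `y`. -/
def RelSimilar {F G : SetFunctor.{u}} (L : RelConn F G) {C D : Type u}
    (γ : C → F.obj C) (δ : D → G.obj D) : C → D → Prop :=
  fun x y => ∃ r, IsSim L γ δ r ∧ r x y

/-- `r : C ⇸ D` is an `L`-bisimulation (for `L : F → F`): both `r` and `r°`
are `L`-simulations. -/
def IsBisim {F : SetFunctor.{u}} (L : RelConn F F) {C D : Type u}
    (γ : C → F.obj C) (δ : D → F.obj D) (r : C → D → Prop) : Prop :=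
  IsSim L γ δ r ∧ IsSim L δ γ (rconv r)

/-- `L`-bisimilarity: `x ≃_L y` iff some `L`-bisimulation relates `x` to `y`. -/
def Bisimilar {F : SetFunctor.{u}} (L : RelConn F F) {C D : Type u}
    (γ : C → F.obj C) (δ : D → F.obj D) : C → D → Prop :=
  fun x y => ∃ r, IsBisim L γ δ r ∧ r x y

/-- Heterogeneous `L`-bisimulation for `L : F → G`: `r` is an `L`-simulation and `r°`
is an `L°`-simulation. -/
def IsBisimHet {F G : SetFunctor.{u}} (L : RelConn F G) {C D : Type u}
    (γ : C → F.obj C) (δ : D → G.obj D) (r : C → D → Prop) : Prop :=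
  IsSim L γ δ r ∧ IsSim L.conv δ γ (rconv r)

/-- Heterogeneous `L`-bisimilarity for `L : F → G`. -/
def BisimilarHet {F G : SetFunctor.{u}} (L : RelConn F G) {C D : Type u}
    (γ : C → F.obj C) (δ : D → G.obj D) : C → D → Prop :=
  fun x y => ∃ r, IsBisimHet L γ δ r ∧ r x y

/-- An `n`-ary predicate lifting for a `Set` functor `F`: a natural transformation
`(2^(-))ⁿ ⇒ 2^(F -)` with the contravariant powerset functor. -/
structure PredLifting (F : SetFunctor.{u}) (n : ℕ) : Type (u + 1) where
  app : ∀ (X : Type u), (Fin n → Set X) → Set (F.obj X)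
  natural : ∀ (X Y : Type u) (f : X → Y) (A : Fin n → Set Y) (a : F.obj X),
    F.map (TypeCat.ofHom f) a ∈ app Y A ↔ a ∈ app X (fun i => f ⁻¹' (A i))

/-- Monotonicity of a predicate lifting. -/
def PredLifting.IsMonotone {F : SetFunctor.{u}} {n : ℕ} (lam : PredLifting F n) : Prop :=
  ∀ (X : Type u) (A B : Fin n → Set X), (∀ i, A i ⊆ B i) → lam.app X A ⊆ lam.app X B

/-- The dual predicate lifting `λ̄_X(A₁,…,Aₙ) = F X \ λ_X(X\A₁,…,X\Aₙ)`. -/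
def PredLifting.dual {F : SetFunctor.{u}} {n : ℕ} (lam : PredLifting F n) :
    PredLifting F n where
  app X A := (lam.app X fun i => (A i)ᶜ)ᶜ
  natural := by
    intro X Y f A a
    simp only [Set.mem_compl_iff, lam.natural, Set.preimage_compl]

/-- The Kantorovich connector `L_Λ` induced by an arity-preserving relation `Λ` between
monotone predicate liftings of `F` and of `G`: `a (L_Λ r) b` iff for every `n`-ary pair
`(λ,μ) ∈ Λ` and all `A₁,…,Aₙ ⊆ X`, `a ∈ λ_X(A₁,…,Aₙ)` implies `b ∈ μ_Y(r[A₁],…,r[Aₙ])`. -/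
def kantorovich {F G : SetFunctor.{u}}
    (Λ : ∀ n : ℕ, PredLifting F n → PredLifting G n → Prop) : RelConn F G where
  rel := fun {X Y} r a b =>
    ∀ (n : ℕ) (lam : PredLifting F n) (mu : PredLifting G n), Λ n lam mu →
      ∀ A : Fin n → Set X, a ∈ lam.app X A → b ∈ mu.app Y (fun i => rimage r (A i))


section AuxNeutral

open RelConn

lemma rcomp_diag_left' {X Y : Type u} (s : X → Y → Prop) : rcomp (diag Y) s = s := by
  funext x y
  simp [rcomp, diag]

lemma rcomp_diag_right' {X Y : Type u} (s : X → Y → Prop) : rcomp s (diag X) = s := by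
  funext x y
  simp [rcomp, diag]

lemma id_rel_diag (F : SetFunctor.{u}) {X : Type u} (b : F.obj X) :
    (RelConn.id F).rel (diag X) b b := by
  intro G L hL Z s a h
  rw [rcomp_diag_left']
  exact h

/-- Arbitrary-arity monotone predicate liftings of `G`. -/
structure MyLift (G : SetFunctor.{u}) (I : Type u) where
  app : ∀ (U : Type u), (I → Set U) → Set (G.obj U)
  natural : ∀ (U V : Type u) (f : U → V) (A : I → Set V) (g : G.obj U),
      G.map (TypeCat.ofHom f) g ∈ app V A ↔ g ∈ app U fun i => f ⁻¹' A i
  mono : ∀ (U : Type u) (A B : I → Set U), (∀ i, A i ⊆ B i) → app U A ⊆ app U B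

/-- The `I`-fold covariant powerset functor. -/
def setFam (I : Type u) : SetFunctor.{u} where
  obj V := I → Set V
  map f := TypeCat.ofHom fun (A : I → Set _) i => f '' A i
  map_id X := by ext A i x; simp
  map_comp f g := by ext A i x; simp

lemma rimage_mono {X Y : Type u} {r₁ r₂ : X → Y → Prop} (h : ∀ x y, r₁ x y → r₂ x y)
    (A : Set X) : rimage r₁ A ⊆ rimage r₂ A := by
  rintro y ⟨x, hx, hr⟩
  exact ⟨x, hx, h _ _ hr⟩

/-- The connector over `setFam I` induced by a lifting. -/
def liftConn {G : SetFunctor.{u}} {I : Type u} (lam : MyLift G I) : RelConn (setFam I) G where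
  rel {V U} q S g := g ∈ lam.app U fun i => rimage q (S i)

lemma liftConn_isConnector {G : SetFunctor.{u}} {I : Type u} (lam : MyLift G I) :
    (liftConn lam).IsConnector := by
  constructor
  · intro X Y r₁ r₂ h S g hg
    exact lam.mono _ _ _ (fun i => rimage_mono h (S i)) hg
  · intro X X' Y Y' f g r
    funext S y'
    apply propext
    have hset : (fun i => rimage (rcomp (rconv (graph g)) (rcomp r (graph f))) (S i))
        = fun i => g ⁻¹' rimage r ((setFam I).map (TypeCat.ofHom f) S i) := by
      funext i
      ext y₀
      simp only [rimage, rcomp, rconv, graph, setFam, Set.mem_preimage, Set.mem_setOf_eq,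
        Set.mem_image]
      constructor
      · rintro ⟨x, hx, y₁, ⟨y₂, rfl, hr⟩, rfl⟩
        exact ⟨f x, ⟨x, hx, rfl⟩, hr⟩
      · rintro ⟨x₁, ⟨x, hx, rfl⟩, hr⟩
        exact ⟨x, hx, g y₀, ⟨f x, rfl, hr⟩, rfl⟩
    constructor
    · intro h
      refine ⟨G.map (TypeCat.ofHom g) y', ⟨(setFam I).map (TypeCat.ofHom f) S, rfl, ?_⟩, rfl⟩
      show G.map (TypeCat.ofHom g) y' ∈ lam.app Y fun i => rimage r ((setFam I).map (TypeCat.ofHom f) S i)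
      rw [lam.natural]
      show y' ∈ lam.app Y' fun i => g ⁻¹' rimage r ((setFam I).map (TypeCat.ofHom f) S i)
      rw [← hset]
      exact h
    · rintro ⟨u, ⟨S', hS', hrel⟩, hgu⟩
      show y' ∈ lam.app Y' fun i =>
        rimage (rcomp (rconv (graph g)) (rcomp r (graph f))) (S i)
      rw [hset]
      have hgu' : G.map (TypeCat.ofHom g) y' = u := hgu
      subst hgu'
      have hS'' : (setFam I).map (TypeCat.ofHom f) S = S' := hS'
      subst hS''
      have := (lam.natural _ _ g (fun i => rimage r ((setFam I).map (TypeCat.ofHom f) S i)) y').mp hrel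
      exact this

lemma kan_of_id {G : SetFunctor.{u}} {X Y : Type u} {t : X → Y → Prop} {a : G.obj X}
    {b : G.obj Y} (hid : (RelConn.id G).rel t a b) {I : Type u} (lam : MyLift G I)
    (A : I → Set X) (hA : a ∈ lam.app X A) : b ∈ lam.app Y fun i => rimage t (A i) := by
  have hprem : (liftConn lam).rel (diag X) A a := by
    show a ∈ lam.app X fun i => rimage (diag X) (A i)
    have e : (fun i => rimage (diag X) (A i)) = A := by
      funext i; ext x; simp [rimage, diag]
    rw [e]; exact hA
  have h := hid (setFam I) (liftConn lam) (liftConn_isConnector lam) X (diag X) A hprem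
  rw [rcomp_diag_right'] at h
  exact h

/-- Dual lifting. -/
def dualLift {G : SetFunctor.{u}} {I : Type u} (mu : MyLift G I) : MyLift G I where
  app U A := (mu.app U fun i => (A i)ᶜ)ᶜ
  natural U V f A g := by
    simp only [Set.mem_compl_iff, mu.natural, Set.preimage_compl]
  mono U A B h := by
    intro g hg hmem
    exact hg (mu.mono U _ _ (fun i => Set.compl_subset_compl.mpr (h i)) hmem)

lemma kan_sym {G : SetFunctor.{u}} {X Y : Type u} {t : X → Y → Prop} {a : G.obj X}
    {b : G.obj Y} (hid : (RelConn.id G).rel t a b) {I : Type u} (mu : MyLift G I)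
    (B : I → Set Y) (hB : b ∈ mu.app Y B) :
    a ∈ mu.app X fun i => rimage (rconv t) (B i) := by
  by_contra hcon
  have h1 : a ∈ (dualLift mu).app X fun i => (rimage (rconv t) (B i))ᶜ := by
    show a ∉ mu.app X fun i => ((rimage (rconv t) (B i))ᶜ)ᶜ
    have e : (fun i => ((rimage (rconv t) (B i))ᶜ)ᶜ) = fun i => rimage (rconv t) (B i) := by
      funext i; exact compl_compl _
    rw [e]; exact hcon
  have h2 := kan_of_id hid (dualLift mu) _ h1
  have h3 : b ∈ mu.app Y fun i => (rimage t ((rimage (rconv t) (B i))ᶜ))ᶜ := by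
    refine mu.mono Y B _ (fun i y hy => ?_) hB
    intro hmem
    obtain ⟨x, hx, htxy⟩ := hmem
    exact hx ⟨y, hy, htxy⟩
  exact h2 h3

lemma rel_precomp {G F : SetFunctor.{u}} {L : RelConn G F} (hN : L.Natural)
    {U V Z₀ : Type u} (f : U → V) (R : V → Z₀ → Prop) (x : G.obj U) (y : F.obj Z₀) :
    L.rel (fun u z => R (f u) z) x y ↔ L.rel R (G.map (TypeCat.ofHom f) x) y := by
  have h := hN V U Z₀ Z₀ f (fun z => z) R
  have h1 : rcomp (rconv (graph (fun z : Z₀ => z))) (rcomp R (graph f))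
      = fun u z => R (f u) z := by
    funext u z; simp [rcomp, rconv, graph, CategoryTheory.types_id]
  rw [h1] at h
  have h2 := congrFun (congrFun h x) y
  have hF : F.map (TypeCat.ofHom (fun z : Z₀ => z)) = 𝟙 _ := F.map_id Z₀
  rw [h2]
  simp [rcomp, rconv, graph, CategoryTheory.Functor.map_id, hF]

lemma comp_right_aux {G F : SetFunctor.{u}} (L : RelConn G F) (hL : L.IsConnector)
    {X Y Z : Type u} {t : X → Y → Prop} {s : Y → Z → Prop} {a : G.obj X} {b : G.obj Y}
    {c : F.obj Z} (hid : (RelConn.id G).rel t a b) (hs : L.rel s b c) :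
    L.rel (rcomp s t) a c := by
  classical
  let mu : MyLift G (CoInt s) :=
    { app := fun U C => {g | L.rel (fun u z => ∃ i : CoInt s, u ∈ C i ∧ z ∈ i.1.2) g c}
      natural := by
        intro U V f A g
        show L.rel _ (G.map (TypeCat.ofHom f) g) c ↔ L.rel _ g c
        rw [← rel_precomp hL.2 f (fun v z => ∃ i : CoInt s, v ∈ A i ∧ z ∈ i.1.2) g c]
        exact Iff.rfl
      mono := by
        intro U A B h g hg
        refine hL.1 _ _ _ _ (fun u z hz => ?_) _ _ hg
        obtain ⟨i, hu, hzz⟩ := hz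
        exact ⟨i, h i hu, hzz⟩ }
  have hb : b ∈ mu.app Y fun i => i.1.1 := by
    show L.rel _ b c
    refine hL.1 _ _ s _ ?_ b c hs
    intro y z hyz
    refine ⟨⟨({y}, {z}), ?_⟩, rfl, rfl⟩
    intro y' hy' z' hz'
    simp only [Set.mem_singleton_iff] at hy' hz'
    subst hy'; subst hz'
    exact hyz
  have ha := kan_sym hid mu _ hb
  refine hL.1 _ _ _ _ ?_ a c ha
  rintro x z ⟨⟨⟨A, B⟩, hAB⟩, hx, hz⟩
  obtain ⟨y, hyA, hty⟩ := hx
  exact ⟨y, hty, hAB y hyA z hz⟩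

lemma relConn_ext {F G : SetFunctor.{u}} {K M : RelConn F G}
    (h : ∀ (X Y : Type u) (r : X → Y → Prop) (a : F.obj X) (b : G.obj Y),
      K.rel r a b ↔ M.rel r a b) : K = M := by
  obtain ⟨k⟩ := K; obtain ⟨m⟩ := M
  congr
  funext X Y r a b
  exact propext (h X Y r a b)

end AuxNeutral

/-- identity relational connectors are neutral for composition:
`L = id_F · L = L · id_G` for every relational connector `L : G → F`. -/
theorem id_comp_neutral (F G : SetFunctor.{u}) (L : RelConn G F) (hL : L.IsConnector) :
    L = (RelConn.id F).comp L ∧ L = L.comp (RelConn.id G) := by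
  constructor
  · apply relConn_ext
    intro X Y r a b
    constructor
    · intro h
      exact ⟨Y, r, diag Y, rcomp_diag_left' r, b, h, id_rel_diag F b⟩
    · rintro ⟨W, t, s, hst, b', hLt, hid⟩
      have h := hid G L hL X t a hLt
      rw [hst] at h
      exact h
  · apply relConn_ext
    intro X Y r a b
    constructor
    · intro h
      exact ⟨X, diag X, r, rcomp_diag_right' r, a, id_rel_diag G a, h⟩
    · rintro ⟨W, t, s, hst, b', hid, hLs⟩
      have h := comp_right_aux L hL hid hLs
      rw [hst] at h
      exact h
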